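/- Fix a seed set S ⊆ V, a set A of added edges disjoint from E, a candidate edge e = ⟨u, v⟩ ∉ E ∪ A with u ∈ S and probability p_{u,v} ∈ [0,1], and an integer θ ≥ 1. Let R_1, …, R_θ be independent random RR sets generated on the augmented graph with edge set E ∪ A, and let Δ_𝓡(v) be the number of R_i containing v but disjoint from S. Then the expectation of (n · p_{u,v} / θ) · Δ_𝓡(v) equals σ(A ∪ {e}, S) − σ(A, S). -/

import Mathlib

open scoped Classical

noncomputable section

/-- The set of nodes reachable from some node of `S` via edges of `g`
(every node reaches itself). -/
def Reach {V : Type*} (S : Finset V) (g : Finset (V × V)) : Set V :=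
  {x | ∃ s ∈ S, Relation.ReflTransGen (fun a b => (a, b) ∈ g) s x}

/-- Probability of the live-edge graph `g ⊆ F`. -/
def liveProb {V : Type*} [DecidableEq V] (F : Finset (V × V)) (p : V × V → ℝ)
    (g : Finset (V × V)) : ℝ :=
  (∏ e ∈ g, p e) * ∏ e ∈ F \ g, (1 - p e)

/-- The expected spread of the seed set `S` over live-edge graphs of edge set `F`. -/
def expSpread {V : Type*} [DecidableEq V] (F : Finset (V × V)) (p : V × V → ℝ)
    (S : Finset V) : ℝ :=
  ∑ g ∈ F.powerset, liveProb F p g * ((Reach S g).ncard : ℝ)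

/-- The reverse reachable set of `w` in `g`. -/
def RR {V : Type*} (w : V) (g : Finset (V × V)) : Set V :=
  {u | w ∈ Reach {u} g}

section Aux

variable {V : Type*}

lemma reach_insert_eq [DecidableEq V] {S : Finset V} {u v : V} (hu : u ∈ S) (g : Finset (V × V)) :
    Reach S (insert (u, v) g) = Reach S g ∪ Reach {v} g := by
  ext x
  constructor
  · rintro ⟨s, hs, hpath⟩
    induction hpath with
    | refl => exact Or.inl ⟨s, hs, .refl⟩
    | @tail b c hab hedge ih =>
      rcases Finset.mem_insert.mp hedge with h1 | h2
      · obtain ⟨rfl, rfl⟩ := Prod.mk.injEq .. ▸ h1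
        exact Or.inr ⟨c, Finset.mem_singleton_self _, .refl⟩
      · rcases ih with ⟨s', hs', hp⟩ | ⟨s', hs', hp⟩
        · exact Or.inl ⟨s', hs', hp.tail h2⟩
        · exact Or.inr ⟨s', hs', hp.tail h2⟩
  · rintro (⟨s, hs, hp⟩ | ⟨s, hs, hp⟩)
    · exact ⟨s, hs, Relation.ReflTransGen.mono (fun a b hab => Finset.mem_insert_of_mem hab) _ _ hp⟩
    · rw [Finset.mem_singleton] at hs; subst hs
      exact ⟨u, hu, Relation.ReflTransGen.head (Finset.mem_insert_self _ _)
        (Relation.ReflTransGen.mono (fun a b hab => Finset.mem_insert_of_mem hab) _ _ hp)⟩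

lemma sum_liveProb [DecidableEq V] (F : Finset (V × V)) (p : V × V → ℝ) :
    ∑ g ∈ F.powerset, liveProb F p g = 1 := by
  have h := Finset.prod_add p (fun e => 1 - p e) F
  simp only [add_sub_cancel] at h
  simp only [liveProb, ← h, Finset.prod_const_one]

lemma rr_inter_empty_iff (w : V) (g : Finset (V × V)) (S : Finset V) :
    RR w g ∩ (S : Set V) = ∅ ↔ w ∉ Reach S g := by
  simp only [Set.eq_empty_iff_forall_notMem, Set.mem_inter_iff, RR, Set.mem_setOf_eq,
    Reach, Finset.mem_singleton, Finset.mem_coe]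
  constructor
  · rintro h ⟨s, hs, hp⟩
    exact h s ⟨⟨s, rfl, hp⟩, hs⟩
  · rintro h s ⟨⟨t, ht, hp⟩, hs⟩
    exact h ⟨t, ht ▸ hs, hp⟩

lemma diff_eq_filter [Fintype V] (S : Finset V) (v : V) (g : Finset (V × V)) :
    Reach {v} g \ Reach S g
      = ↑(Finset.univ.filter (fun w : V => v ∈ RR w g ∧ RR w g ∩ (S : Set V) = ∅)) := by
  ext w
  simp only [Set.mem_diff, Finset.coe_filter, Finset.mem_univ, true_and, Set.mem_setOf_eq,
    rr_inter_empty_iff]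
  constructor
  · rintro ⟨h1, h2⟩; exact ⟨h1, h2⟩
  · rintro ⟨h1, h2⟩; exact ⟨h1, h2⟩

lemma sum_ind [Fintype V] (S : Finset V) (v : V) (g : Finset (V × V)) :
    (∑ w : V, if v ∈ RR w g ∧ RR w g ∩ (S : Set V) = ∅ then (1 : ℝ) else 0)
      = ((Reach {v} g \ Reach S g).ncard : ℝ) := by
  rw [Finset.sum_boole, diff_eq_filter, Set.ncard_coe_finset]

lemma ncard_union_reach [Fintype V] (S : Finset V) (v : V) (g : Finset (V × V)) :
    ((Reach S g ∪ Reach {v} g).ncard : ℝ)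
      = ((Reach S g).ncard : ℝ) + ((Reach {v} g \ Reach S g).ncard : ℝ) := by
  rw [← Set.union_diff_self, Set.ncard_union_eq Set.disjoint_sdiff_right
    (Set.toFinite _) (Set.toFinite _)]
  push_cast; ring

lemma liveProb_insert_left [DecidableEq V] {F g : Finset (V × V)} {e : V × V}
    (p : V × V → ℝ) (heF : e ∉ F) (hg : g ⊆ F) :
    liveProb (insert e F) p g = (1 - p e) * liveProb F p g := by
  have heg : e ∉ g := fun h => heF (hg h)
  have hd : insert e F \ g = insert e (F \ g) := Finset.insert_sdiff_of_notMem _ heg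
  have hnm : e ∉ F \ g := fun h => heF (Finset.mem_sdiff.mp h).1
  rw [liveProb, liveProb, hd, Finset.prod_insert hnm]
  ring

lemma liveProb_insert_both [DecidableEq V] {F g : Finset (V × V)} {e : V × V}
    (p : V × V → ℝ) (heF : e ∉ F) (hg : g ⊆ F) :
    liveProb (insert e F) p (insert e g) = p e * liveProb F p g := by
  have heg : e ∉ g := fun h => heF (hg h)
  have hd : insert e F \ insert e g = F \ g := by
    ext x
    simp only [Finset.mem_sdiff, Finset.mem_insert, not_or]
    constructor
    · rintro ⟨hx1 | hx2, hx3, hx4⟩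
      · exact absurd (hx1 ▸ hx3) (by simp)
      · exact ⟨hx2, hx4⟩
    · rintro ⟨hx1, hx2⟩
      exact ⟨Or.inr hx1, fun h => heF (h ▸ hx1), hx2⟩
  rw [liveProb, liveProb, hd, Finset.prod_insert heg]
  ring

end Aux

/-- For a seed set `S`, added edges `A` disjoint from `E`, a candidate edge
`e = ⟨u,v⟩ ∉ E ∪ A` with `u ∈ S`, and `θ ≥ 1` i.i.d. random RR sets `R_i = RR(w_i, g_i)`
generated on the augmented graph `E ∪ A`, the expectation of
`(n · p_{u,v} / θ) · Δ_𝓡(v)` — where `Δ_𝓡(v)` counts the `R_i` containing `v` but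
disjoint from `S` — equals `σ(A ∪ {e}, S) − σ(A, S)`. -/
theorem rr_marginal_gain_unbiased {V : Type*} [Fintype V] [DecidableEq V]
    (E A : Finset (V × V)) (p : V × V → ℝ)
    (hp : ∀ e, 0 ≤ p e ∧ p e ≤ 1)
    (hEA : Disjoint E A)
    (S : Finset V) (u v : V) (hu : u ∈ S) (he : (u, v) ∉ E ∪ A)
    (θ : ℕ) (hθ : 1 ≤ θ) :
    (∑ ws : Fin θ → V, ∑ gs ∈ Fintype.piFinset (fun _ : Fin θ => (E ∪ A).powerset),
        (∏ i, (1 / (Fintype.card V : ℝ)) * liveProb (E ∪ A) p (gs i)) *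
          (((Fintype.card V : ℝ) * p (u, v) / (θ : ℝ)) *
            ((Finset.univ.filter
                (fun i : Fin θ =>
                  v ∈ RR (ws i) (gs i) ∧ RR (ws i) (gs i) ∩ (S : Set V) = ∅)).card : ℝ)))
      = expSpread (E ∪ (A ∪ {(u, v)})) p S - expSpread (E ∪ A) p S := by
  classical
  have hV : Nonempty V := ⟨u⟩
  set F : Finset (V × V) := E ∪ A with hF
  set n : ℝ := (Fintype.card V : ℝ) with hn
  have hnpos : (0 : ℝ) < n := by
    rw [hn]; exact_mod_cast Fintype.card_pos
  have hθpos : (0 : ℝ) < (θ : ℝ) := by exact_mod_cast hθ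
  set pe : ℝ := p (u, v) with hpe
  set c : ℝ := n * pe / (θ : ℝ) with hc
  set ind : V → Finset (V × V) → ℝ :=
    fun w g => if v ∈ RR w g ∧ RR w g ∩ (S : Set V) = ∅ then (1 : ℝ) else 0 with hind
  set D : Finset (V × V) → ℝ := fun g => ((Reach {v} g \ Reach S g).ncard : ℝ) with hDdef
  set Sig : ℝ := ∑ g ∈ F.powerset, liveProb F p g * D g with hSig
  -- ### Step 1: per-coordinate expectation
  have step1 : ∀ i : Fin θ,
      (∑ ws : Fin θ → V, ∑ gs ∈ Fintype.piFinset (fun _ : Fin θ => F.powerset),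
        (∏ j, (1 / n) * liveProb F p (gs j)) * ind (ws i) (gs i))
      = (1 / n) * Sig := by
    intro i
    set H : Fin θ → V → Finset (V × V) → ℝ :=
      fun j w g => ((1 / n) * liveProb F p g) * (if j = i then ind w g else 1) with hH
    have hsplit : ∀ (ws : Fin θ → V) (gs : Fin θ → Finset (V × V)),
        (∏ j, (1 / n) * liveProb F p (gs j)) * ind (ws i) (gs i)
        = ∏ j, H j (ws j) (gs j) := by
      intro ws gs
      have h1 : ∏ j, H j (ws j) (gs j)
          = (∏ j, (1 / n) * liveProb F p (gs j))
            * ∏ j, (if j = i then ind (ws j) (gs j) else 1) := by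
        rw [← Finset.prod_mul_distrib]
      rw [h1, Finset.prod_ite_eq' Finset.univ i (fun j => ind (ws j) (gs j)),
        if_pos (Finset.mem_univ i)]
    calc (∑ ws : Fin θ → V, ∑ gs ∈ Fintype.piFinset (fun _ : Fin θ => F.powerset),
            (∏ j, (1 / n) * liveProb F p (gs j)) * ind (ws i) (gs i))
        = ∑ ws : Fin θ → V, ∑ gs ∈ Fintype.piFinset (fun _ : Fin θ => F.powerset),
            ∏ j, H j (ws j) (gs j) := by
          exact Finset.sum_congr rfl fun ws _ => Finset.sum_congr rfl fun gs _ => hsplit ws gs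
      _ = ∑ ws : Fin θ → V, ∏ j, ∑ g ∈ F.powerset, H j (ws j) g := by
          exact Finset.sum_congr rfl fun ws _ =>
            (Finset.prod_univ_sum (fun _ => F.powerset) (fun j g => H j (ws j) g)).symm
      _ = ∑ ws ∈ Fintype.piFinset (fun _ : Fin θ => (Finset.univ : Finset V)),
            ∏ j, ∑ g ∈ F.powerset, H j (ws j) g := by rw [Fintype.piFinset_univ]
      _ = ∏ j, ∑ w : V, ∑ g ∈ F.powerset, H j w g := by
          exact (Finset.prod_univ_sum (fun _ => (Finset.univ : Finset V))
            (fun j w => ∑ g ∈ F.powerset, H j w g)).symm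
      _ = (1 / n) * Sig := by
          have hother : ∀ j ∈ (Finset.univ : Finset (Fin θ)), j ≠ i →
              (∑ w : V, ∑ g ∈ F.powerset, H j w g) = 1 := by
            intro j _ hj
            have hval : ∀ (w : V), ∀ g ∈ F.powerset,
                H j w g = (1 / n) * liveProb F p g := by
              intro w g _
              simp [hH, hj]
            calc ∑ w : V, ∑ g ∈ F.powerset, H j w g
                = ∑ w : V, ∑ g ∈ F.powerset, (1 / n) * liveProb F p g :=
                  Finset.sum_congr rfl fun w _ =>
                    Finset.sum_congr rfl fun g hg => hval w g hg
              _ = ∑ _w : V, (1 / n) := by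
                  refine Finset.sum_congr rfl fun w _ => ?_
                  rw [← Finset.mul_sum, sum_liveProb, mul_one]
              _ = 1 := by
                  rw [Finset.sum_const, Finset.card_univ, nsmul_eq_mul, ← hn]
                  field_simp
          have hmain : (∑ w : V, ∑ g ∈ F.powerset, H i w g) = (1 / n) * Sig := by
            have hHi : ∀ (w : V) (g : Finset (V × V)),
                H i w g = ((1 / n) * liveProb F p g) * ind w g := by
              intro w g; simp [hH]
            rw [Finset.sum_comm]
            have hrow : ∀ g ∈ F.powerset,
                (∑ w : V, H i w g) = (1 / n) * (liveProb F p g * D g) := by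
              intro g _
              simp only [hHi]
              rw [← Finset.mul_sum]
              have hsind : (∑ w : V, ind w g) = D g := by
                simp only [hind, hDdef]
                exact sum_ind S v g
              rw [hsind]; ring
            rw [Finset.sum_congr rfl hrow, ← Finset.mul_sum, hSig]
          rw [Finset.prod_eq_single i hother
            (fun h => absurd (Finset.mem_univ i) h), hmain]
  -- ### Step 2: LHS equals pe * Sig
  have hLHS : (∑ ws : Fin θ → V, ∑ gs ∈ Fintype.piFinset (fun _ : Fin θ => F.powerset),
        (∏ i, (1 / n) * liveProb F p (gs i)) *
          (c * ((Finset.univ.filter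
              (fun i : Fin θ =>
                v ∈ RR (ws i) (gs i) ∧ RR (ws i) (gs i) ∩ (S : Set V) = ∅)).card : ℝ)))
      = pe * Sig := by
    have hcount : ∀ (ws : Fin θ → V) (gs : Fin θ → Finset (V × V)),
        ((Finset.univ.filter
            (fun i : Fin θ =>
              v ∈ RR (ws i) (gs i) ∧ RR (ws i) (gs i) ∩ (S : Set V) = ∅)).card : ℝ)
        = ∑ i, ind (ws i) (gs i) := by
      intro ws gs
      rw [Finset.card_filter]
      push_cast
      rfl
    calc (∑ ws : Fin θ → V, ∑ gs ∈ Fintype.piFinset (fun _ : Fin θ => F.powerset),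
            (∏ i, (1 / n) * liveProb F p (gs i)) *
              (c * ((Finset.univ.filter
                  (fun i : Fin θ =>
                    v ∈ RR (ws i) (gs i) ∧ RR (ws i) (gs i) ∩ (S : Set V) = ∅)).card : ℝ)))
        = ∑ ws : Fin θ → V, ∑ gs ∈ Fintype.piFinset (fun _ : Fin θ => F.powerset),
            ∑ i, c * ((∏ j, (1 / n) * liveProb F p (gs j)) * ind (ws i) (gs i)) := by
          refine Finset.sum_congr rfl fun ws _ => Finset.sum_congr rfl fun gs _ => ?_
          rw [hcount, Finset.mul_sum, Finset.mul_sum]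
          exact Finset.sum_congr rfl fun i _ => by ring
      _ = ∑ i : Fin θ, ∑ ws : Fin θ → V, ∑ gs ∈ Fintype.piFinset (fun _ : Fin θ => F.powerset),
            c * ((∏ j, (1 / n) * liveProb F p (gs j)) * ind (ws i) (gs i)) := by
          rw [Finset.sum_congr rfl fun ws (_ : ws ∈ Finset.univ) => Finset.sum_comm]
          exact Finset.sum_comm
      _ = ∑ i : Fin θ, c * ((1 / n) * Sig) := by
          refine Finset.sum_congr rfl fun i _ => ?_
          rw [← step1 i, Finset.mul_sum]
          exact Finset.sum_congr rfl fun ws _ => by rw [Finset.mul_sum]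
      _ = (θ : ℝ) * (c * ((1 / n) * Sig)) := by
          rw [Finset.sum_const, Finset.card_univ, Fintype.card_fin, nsmul_eq_mul]
      _ = pe * Sig := by
          rw [hc]
          field_simp
  -- ### Step 3: RHS equals pe * Sig
  have heF : (u, v) ∉ F := he
  have hF' : E ∪ (A ∪ {(u, v)}) = insert (u, v) F := by
    ext x
    simp only [hF, Finset.mem_union, Finset.mem_insert, Finset.mem_singleton]
    tauto
  have hRHS : expSpread (E ∪ (A ∪ {(u, v)})) p S - expSpread F p S = pe * Sig := by
    rw [hF']
    have hdisj : Disjoint F.powerset (Finset.image (insert (u, v)) F.powerset) := by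
      rw [Finset.disjoint_left]
      intro g hg hgim
      obtain ⟨t, _, rfl⟩ := Finset.mem_image.mp hgim
      exact heF (Finset.mem_powerset.mp hg (Finset.mem_insert_self _ _))
    have hinj : ∀ x ∈ F.powerset, ∀ y ∈ F.powerset,
        insert (u, v) x = insert (u, v) y → x = y := by
      intro x hx y hy hxy
      have hex : (u, v) ∉ x := fun h => heF (Finset.mem_powerset.mp hx h)
      have hey : (u, v) ∉ y := fun h => heF (Finset.mem_powerset.mp hy h)
      ext a
      constructor
      · intro ha
        have : a ∈ insert (u, v) y := hxy ▸ Finset.mem_insert_of_mem ha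
        rcases Finset.mem_insert.mp this with h1 | h2
        · exact absurd (h1 ▸ ha) hex
        · exact h2
      · intro ha
        have h' : a ∈ insert (u, v) x := by
          rw [hxy]; exact Finset.mem_insert_of_mem ha
        rcases Finset.mem_insert.mp h' with h1 | h2
        · exact absurd (h1 ▸ ha) hey
        · exact h2
    rw [expSpread, Finset.powerset_insert, Finset.sum_union hdisj, Finset.sum_image hinj]
    rw [expSpread]
    have h1 : ∀ g ∈ F.powerset,
        liveProb (insert (u, v) F) p g * ((Reach S g).ncard : ℝ)
        = (1 - pe) * (liveProb F p g * ((Reach S g).ncard : ℝ)) := by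
      intro g hg
      rw [liveProb_insert_left p heF (Finset.mem_powerset.mp hg)]
      ring
    have h2 : ∀ g ∈ F.powerset,
        liveProb (insert (u, v) F) p (insert (u, v) g) *
          ((Reach S (insert (u, v) g)).ncard : ℝ)
        = pe * (liveProb F p g * (((Reach S g).ncard : ℝ) + D g)) := by
      intro g hg
      rw [liveProb_insert_both p heF (Finset.mem_powerset.mp hg),
        reach_insert_eq hu g, ncard_union_reach S v g, hDdef]
      ring
    have hsum : ∑ g ∈ F.powerset, liveProb F p g * (((Reach S g).ncard : ℝ) + D g)
        = (∑ g ∈ F.powerset, liveProb F p g * ((Reach S g).ncard : ℝ))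
          + ∑ g ∈ F.powerset, liveProb F p g * D g := by
      rw [← Finset.sum_add_distrib]
      exact Finset.sum_congr rfl fun g _ => by ring
    rw [Finset.sum_congr rfl h1, Finset.sum_congr rfl h2, ← Finset.mul_sum,
      ← Finset.mul_sum, hsum, hSig]
    ring
  rw [hRHS]
  exact hLHS
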